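/- Let κ be regular and λ = (2^{<κ})^+. If λ ↛ (κ + log κ)^2_2, then for every ordinal α < λ^+ we have α ↛ (κ+log κ, κ+log κ, ω)^2: there is a 3-coloring of pairs from α with no 0- or 1-homogeneous set of type κ+log κ and no 2-homogeneous set of type ω. -/

import Mathlib

open Cardinal Ordinal

/-- The order type of a set of ordinals (an `Ordinal.{1}` for universe reasons). -/
noncomputable def otype (s : Set Ordinal.{0}) : Ordinal.{1} :=
  Ordinal.type (Subrel ((· < ·) : Ordinal → Ordinal → Prop) (· ∈ s))

/-- `OT s o` means the set of ordinals `s` has order type `o`. -/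
def OT (s : Set Ordinal.{0}) (o : Ordinal.{0}) : Prop := otype s = Ordinal.lift.{1,0} o

/-- `2^{<κ} = sup { 2^μ : μ < κ }`. -/
noncomputable def twoLT (κ : Cardinal.{0}) : Cardinal.{0} := ⨆ μ : Set.Iio κ, 2 ^ (μ : Cardinal)

/-- `X` is `i`-homogeneous for the pair coloring `f`. -/
def Homog {α : Type*} (f : Ordinal → Ordinal → α) (X : Set Ordinal) (i : α) : Prop :=
  ∀ a ∈ X, ∀ b ∈ X, a < b → f a b = i

/-- `log κ`: the least cardinal `μ` with `2^μ ≥ κ`. -/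
noncomputable def clog (κ : Cardinal.{0}) : Cardinal.{0} := sInf {μ : Cardinal | κ ≤ 2 ^ μ}

/-- A strictly increasing map between sets of ordinals preserves order type. -/
lemma otype_image_eq {X : Set Ordinal.{0}} (h : Ordinal → Ordinal)
    (hmono : ∀ a ∈ X, ∀ b ∈ X, a < b → h a < h b) :
    otype (h '' X) = otype X := by
  refine (Ordinal.type_eq.2 ⟨RelIso.symm ?_⟩)
  have hinj : ∀ a ∈ X, ∀ b ∈ X, h a = h b → a = b := by
    intro a ha b hb hab
    rcases lt_trichotomy a b with hlt | he | hgt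
    · exact absurd hab (hmono a ha b hb hlt).ne
    · exact he
    · exact absurd hab.symm (hmono b hb a ha hgt).ne
  refine RelIso.ofSurjective
    ⟨⟨fun y => ⟨h y.1, ⟨y.1, y.2, rfl⟩⟩, ?_⟩, ?_⟩ ?_
  · rintro ⟨a, ha⟩ ⟨b, hb⟩ hab
    exact Subtype.ext (hinj a ha b hb (congrArg Subtype.val hab))
  · rintro ⟨a, ha⟩ ⟨b, hb⟩
    constructor
    · intro hlt
      rcases lt_trichotomy a b with h1 | h1 | h1
      · exact h1
      · subst h1; exact absurd hlt (lt_irrefl _)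
      · exact absurd (hmono b hb a ha h1) (asymm hlt)
    · exact hmono a ha b hb
  · rintro ⟨y, x, hx, rfl⟩
    exact ⟨⟨x, hx⟩, rfl⟩

/-- A set of ordinals admitting a strictly decreasing map does not have order type `ω`. -/
lemma not_OT_omega0 {X : Set Ordinal.{0}} (h : Ordinal → Ordinal)
    (hanti : ∀ a ∈ X, ∀ b ∈ X, a < b → h b < h a) : ¬ OT X Ordinal.omega0 := by
  intro hX
  have hX' : otype X = Ordinal.lift.{1,0} Ordinal.omega0 := hX
  have hty : Ordinal.lift.{1,1}
      (Ordinal.type (Subrel ((· < ·) : Ordinal → Ordinal → Prop) (· ∈ X)))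
      = Ordinal.lift.{1,0} (Ordinal.type ((· < ·) : ℕ → ℕ → Prop)) := by
    rw [Ordinal.lift_id, Ordinal.type_nat_lt, Ordinal.lift_omega0]
    rw [show Ordinal.type (Subrel ((· < ·) : Ordinal → Ordinal → Prop) (· ∈ X)) = otype X from rfl,
      hX', Ordinal.lift_omega0]
  obtain ⟨e⟩ := Ordinal.lift_type_eq.{1,0,1}.1 hty
  set seq : ℕ → Ordinal := fun n => (e.symm n).1 with hseq
  have hmem : ∀ n, seq n ∈ X := fun n => (e.symm n).2
  have hmono : ∀ m n : ℕ, m < n → seq m < seq n := by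
    intro m n hmn
    exact e.symm.map_rel_iff.2 hmn
  have hdec : ∀ n : ℕ, h (seq (n + 1)) < h (seq n) := fun n =>
    hanti (seq n) (hmem n) (seq (n + 1)) (hmem (n + 1)) (hmono n (n + 1) (Nat.lt_succ_self n))
  exact (RelEmbedding.natGT (fun n => h (seq n)) hdec).not_wellFounded
    Ordinal.lt_wf

/-- (Proposition 5.6) If `λ ↛ (κ + log κ)²₂` then `α ↛ (κ+log κ, κ+log κ, ω)²`
for every `α < λ⁺`. -/
theorem prop_5_6 (κ : Cardinal.{0}) (hκ : κ.IsRegular)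
    (hneg : ∃ f : Ordinal → Ordinal → Fin 2,
      ∀ X ⊆ Set.Iio (Order.succ (twoLT κ)).ord, ∀ i, Homog f X i →
        ¬ OT X (κ.ord + (clog κ).ord)) :
    ∀ α < (Order.succ (Order.succ (twoLT κ))).ord,
      ∃ g : Ordinal → Ordinal → Fin 3, ∀ X ⊆ Set.Iio α,
        (Homog g X 0 → ¬ OT X (κ.ord + (clog κ).ord)) ∧
        (Homog g X 1 → ¬ OT X (κ.ord + (clog κ).ord)) ∧
        (Homog g X 2 → ¬ OT X Ordinal.omega0) := by
  obtain ⟨f, hf⟩ := hneg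
  intro α hα
  set μ := Order.succ (twoLT κ) with hμdef
  have hcard : α.card ≤ μ := Order.lt_succ_iff.mp (Cardinal.lt_ord.mp hα)
  have hmk : #(Set.Iio α) ≤ #(Set.Iio μ.ord) := by
    rw [Ordinal.mk_Iio_ordinal, Ordinal.mk_Iio_ordinal, Cardinal.card_ord]
    exact Cardinal.lift_le.2 hcard
  obtain ⟨e⟩ := Cardinal.le_def _ _ |>.1 hmk
  set h : Ordinal → Ordinal := fun o => if ho : o < α then (e ⟨o, ho⟩ : Ordinal) else 0
    with hhdef
  have hh_lt : ∀ o < α, h o < μ.ord := by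
    intro o ho
    simp only [hhdef, dif_pos ho]
    exact (e ⟨o, ho⟩).2
  have hh_inj : ∀ a, a < α → ∀ b, b < α → h a = h b → a = b := by
    intro a ha b hb hab
    simp only [hhdef, dif_pos ha, dif_pos hb] at hab
    have := e.injective (Subtype.ext hab)
    exact congrArg Subtype.val this
  refine ⟨fun a b => if hab : a < α ∧ b < α then
      (if h a < h b then (f (h a) (h b)).castSucc else 2) else 0, ?_⟩
  intro X hX
  -- key fact for colours 0 and 1
  have key : ∀ j : Fin 2, Homog (fun a b => if hab : a < α ∧ b < α then
      (if h a < h b then (f (h a) (h b)).castSucc else 2) else 0) X j.castSucc →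
      ¬ OT X (κ.ord + (clog κ).ord) := by
    intro j hhom hOT
    have hmono : ∀ a ∈ X, ∀ b ∈ X, a < b → h a < h b := by
      intro a ha b hb hab
      have hg := hhom a ha b hb hab
      simp only [dif_pos (show a < α ∧ b < α from ⟨hX ha, hX hb⟩)] at hg
      by_contra hcon
      rw [if_neg hcon] at hg
      have := (Fin.castSucc_lt_last j).ne
      simp only [Fin.last] at this
      exact this hg.symm
    have hhomf : Homog f (h '' X) j := by
      rintro x ⟨a, ha, rfl⟩ y ⟨b, hb, rfl⟩ hxy
      have hab : a < b := by
        rcases lt_trichotomy a b with h1 | h1 | h1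
        · exact h1
        · subst h1; exact absurd hxy (lt_irrefl _)
        · exact absurd (hmono b hb a ha h1) (asymm hxy)
      have hg := hhom a ha b hb hab
      simp only [dif_pos (show a < α ∧ b < α from ⟨hX ha, hX hb⟩), if_pos (hmono a ha b hb hab)] at hg
      exact Fin.castSucc_injective 2 hg
    have hsub : h '' X ⊆ Set.Iio μ.ord := by
      rintro x ⟨a, ha, rfl⟩
      exact hh_lt a (hX ha)
    refine hf (h '' X) hsub j hhomf ?_
    unfold OT at hOT ⊢
    rw [otype_image_eq h hmono, hOT]
  refine ⟨?_, ?_, ?_⟩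
  · intro hhom
    exact key 0 (by exact hhom)
  · intro hhom
    exact key 1 (by exact hhom)
  · intro hhom
    refine not_OT_omega0 h ?_
    intro a ha b hb hab
    have hg := hhom a ha b hb hab
    simp only [dif_pos (show a < α ∧ b < α from ⟨hX ha, hX hb⟩)] at hg
    have hnlt : ¬ h a < h b := by
      intro hcon
      rw [if_pos hcon] at hg
      have := (Fin.castSucc_lt_last (f (h a) (h b))).ne
      simp only [Fin.last] at this
      exact this hg
    rcases lt_trichotomy (h a) (h b) with h1 | h1 | h1
    · exact absurd h1 hnlt
    · exact absurd (hh_inj a (hX ha) b (hX hb) h1) hab.ne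
    · exact h1
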